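/- With notation as in Katzman's example, let τ_q = σ_1 ··· σ_r be a factorization of τ_q = 1 + t + ... + t^{q−2} into distinct irreducible polynomials in k[t]. Then I_q + (τ_q) = ∩_{i=1}^r (I_q + (σ_i)) is a primary decomposition, each I_q + (σ_i) being primary to the maximal ideal (x, y, σ_i), and (x, y, σ_i)^{2q} ⊆ I_q + (σ_i) for each i. -/

import Mathlib

open MvPolynomial

/-- Katzman's ideal `I_q = (x^q, y^q, xy(x-y)(x-ty))` in `R = k[t][x,y]`, realized as
`MvPolynomial (Fin 2) (Polynomial k)` with `x = X 0`, `y = X 1`, `t = C Polynomial.X`. -/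
noncomputable def katzmanIdeal (k : Type*) [Field k] (q : ℕ) :
    Ideal (MvPolynomial (Fin 2) (Polynomial k)) :=
  Ideal.span {X 0 ^ q, X 1 ^ q,
    X 0 * X 1 * (X 0 - X 1) * (X 0 - C Polynomial.X * X 1)}

/-- `τ_q = 1 + t + ... + t^{q-2} ∈ k[t]`. -/
noncomputable def tau (k : Type*) [Field k] (q : ℕ) : Polynomial k :=
  ∑ i ∈ Finset.range (q - 1), Polynomial.X ^ i

/-- `J_q = I_q + (x² y^{q-1})`. -/
noncomputable def katzmanJ (k : Type*) [Field k] (q : ℕ) :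
    Ideal (MvPolynomial (Fin 2) (Polynomial k)) :=
  katzmanIdeal k q + Ideal.span {X 0 ^ 2 * X 1 ^ (q - 1)}

/-- If `a, b` are coprime, then `(I + (a)) ∩ (I + (b)) = I + (ab)`. -/
lemma aux_inf_coprime {A : Type*} [CommRing A] (I : Ideal A) {a b : A}
    (h : IsCoprime a b) :
    (I + Ideal.span {a}) ⊓ (I + Ideal.span {b}) = I + Ideal.span {a * b} := by
  apply le_antisymm
  · intro f hf
    have hfa : f ∈ I + Ideal.span {a} := (Submodule.mem_inf.mp hf).1
    have hfb : f ∈ I + Ideal.span {b} := (Submodule.mem_inf.mp hf).2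
    obtain ⟨u, v, huv⟩ := h
    rw [Ideal.add_eq_sup] at hfa hfb
    obtain ⟨i1, hi1, g1, hg1, hf1⟩ := Submodule.mem_sup.mp hfa
    obtain ⟨i2, hi2, g2, hg2, hf2⟩ := Submodule.mem_sup.mp hfb
    obtain ⟨c1, hc1⟩ := Ideal.mem_span_singleton'.mp hg1
    obtain ⟨c2, hc2⟩ := Ideal.mem_span_singleton'.mp hg2
    rw [Ideal.add_eq_sup]
    refine Submodule.mem_sup.mpr ⟨u * a * i2 + v * b * i1,
      Ideal.add_mem _ (Ideal.mul_mem_left _ _ hi2) (Ideal.mul_mem_left _ _ hi1),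
      (u * c2 + v * c1) * (a * b), Ideal.mem_span_singleton'.mpr ⟨_, rfl⟩, ?_⟩
    have h1 : i1 + c1 * a = f := by rw [hc1]; exact hf1
    have h2 : i2 + c2 * b = f := by rw [hc2]; exact hf2
    calc u * a * i2 + v * b * i1 + (u * c2 + v * c1) * (a * b)
        = u * a * (i2 + c2 * b) + v * b * (i1 + c1 * a) := by ring
      _ = (u * a + v * b) * f := by rw [h1, h2]; ring
      _ = f := by rw [huv, one_mul]
  · apply le_inf
    · rw [Ideal.add_eq_sup, Ideal.add_eq_sup]
      exact sup_le_sup_left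
        (Ideal.span_singleton_le_span_singleton.mpr (dvd_mul_right a b)) _
    · rw [Ideal.add_eq_sup, Ideal.add_eq_sup]
      exact sup_le_sup_left
        (Ideal.span_singleton_le_span_singleton.mpr (dvd_mul_left b a)) _

/-- `I + (∏_{i ∈ s} σ i) = ∩_{i ∈ s} (I + (σ i))` for pairwise coprime `σ i`. -/
lemma aux_prod_inf {A : Type*} [CommRing A] (I : Ideal A) {ι : Type*} [DecidableEq ι]
    (σ : ι → A) (s : Finset ι)
    (hc : ∀ i ∈ s, ∀ j ∈ s, i ≠ j → IsCoprime (σ i) (σ j)) :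
    I + Ideal.span {∏ i ∈ s, σ i} = s.inf (fun i => I + Ideal.span {σ i}) := by
  induction s using Finset.induction_on with
  | empty => simp [Ideal.span_singleton_one, Ideal.add_eq_sup]
  | @insert a s ha ih =>
    have hcop : IsCoprime (σ a) (∏ i ∈ s, σ i) :=
      IsCoprime.prod_right fun j hj =>
        hc a (Finset.mem_insert_self a s) j (Finset.mem_insert_of_mem hj)
          (fun h => ha (h ▸ hj))
    rw [Finset.prod_insert ha, Finset.inf_insert,
      ← ih (fun i hi j hj hij =>
        hc i (Finset.mem_insert_of_mem hi) j (Finset.mem_insert_of_mem hj) hij),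
      ← aux_inf_coprime I hcop]

/-- `(X ⊔ S)^(n+1) ≤ X^(n+1) ⊔ S`. -/
lemma aux_sup_pow {A : Type*} [CommRing A] (X S : Ideal A) (n : ℕ) :
    (X ⊔ S) ^ (n + 1) ≤ X ^ (n + 1) ⊔ S := by
  induction n with
  | zero => simp
  | succ n ih =>
    calc (X ⊔ S) ^ (n + 1 + 1) = (X ⊔ S) ^ (n + 1) * (X ⊔ S) := pow_succ _ _
      _ ≤ (X ^ (n + 1) ⊔ S) * (X ⊔ S) := Ideal.mul_mono_left ih
      _ = X ^ (n + 1) * X ⊔ X ^ (n + 1) * S ⊔ (S * X ⊔ S * S) := by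
          rw [Ideal.sup_mul, Ideal.mul_sup, Ideal.mul_sup]
      _ ≤ X ^ (n + 1 + 1) ⊔ S := by
          refine sup_le (sup_le ?_ ?_) (sup_le ?_ ?_)
          · rw [← pow_succ]; exact le_sup_left
          · exact Ideal.mul_le_right.trans le_sup_right
          · exact Ideal.mul_le_left.trans le_sup_right
          · exact Ideal.mul_le_left.trans le_sup_right

set_option maxHeartbeats 1000000 in
theorem katzman_plus_tau_primary_decomposition
    {k : Type*} [Field k] {p : ℕ} (hp : p.Prime) [CharP k p]
    (q : ℕ) (hq : ∃ e : ℕ, q = p ^ e)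
    (r : ℕ) (σ : Fin r → Polynomial k)
    (hirr : ∀ i, Irreducible (σ i))
    (hdistinct : ∀ i j, i ≠ j → ¬ Associated (σ i) (σ j))
    (hfact : tau k q = ∏ i, σ i) :
    katzmanIdeal k q + Ideal.span {C (tau k q)} =
      (⨅ i, katzmanIdeal k q + Ideal.span {C (σ i)}) ∧
    (∀ i, (katzmanIdeal k q + Ideal.span {C (σ i)}).IsPrimary) ∧
    (∀ i, (Ideal.span {X 0, X 1, C (σ i)} :
        Ideal (MvPolynomial (Fin 2) (Polynomial k))).IsMaximal) ∧
    (∀ i, (katzmanIdeal k q + Ideal.span {C (σ i)}).radical =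
        Ideal.span {X 0, X 1, C (σ i)}) ∧
    (∀ i, (Ideal.span {X 0, X 1, C (σ i)} :
        Ideal (MvPolynomial (Fin 2) (Polynomial k))) ^ (2 * q) ≤
      katzmanIdeal k q + Ideal.span {C (σ i)}) := by
  have hq0 : 0 < q := by obtain ⟨e, rfl⟩ := hq; exact pow_pos hp.pos e
  set R := MvPolynomial (Fin 2) (Polynomial k)
  -- maximality
  have hmax : ∀ i, (Ideal.span {X 0, X 1, C (σ i)} : Ideal R).IsMaximal := by
    intro i
    haveI hσmax : (Ideal.span {σ i}).IsMaximal :=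
      PrincipalIdealRing.isMaximal_of_irreducible (hirr i)
    have hsurj : Function.Surjective (constantCoeff : R →+* Polynomial k) :=
      fun a => ⟨C a, constantCoeff_C _ a⟩
    have hker : Ideal.comap (constantCoeff : R →+* Polynomial k) (Ideal.span {σ i})
        = Ideal.span {X 0, X 1, C (σ i)} := by
      apply le_antisymm
      · intro f hf
        obtain ⟨c, hc⟩ : σ i ∣ constantCoeff f :=
          Ideal.mem_span_singleton.mp (Ideal.mem_comap.mp hf)
        have hfm : f - C (constantCoeff f) ∈
            Ideal.span ({X 0, X 1, C (σ i)} : Set R) := by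
          have himg : (X '' ({0, 1} : Set (Fin 2)) : Set R) = {X 0, X 1} := by
            rw [Set.image_insert_eq, Set.image_singleton]
          have hmem : f - C (constantCoeff f) ∈
              Ideal.span (X '' ({0, 1} : Set (Fin 2)) : Set R) := by
            rw [mem_ideal_span_X_image]
            intro m hm
            by_contra hcon
            push_neg at hcon
            have hm0 : m = 0 := by
              ext j
              fin_cases j
              · exact hcon 0 (by simp)
              · exact hcon 1 (by simp)
            rw [MvPolynomial.mem_support_iff, hm0] at hm
            apply hm
            rw [constantCoeff_eq]
            rw [coeff_sub, coeff_zero_C, sub_self]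
          rw [himg] at hmem
          exact Ideal.span_mono (by intro g hg; simp only [Set.mem_insert_iff,
            Set.mem_singleton_iff] at hg ⊢; tauto) hmem
        have hCc : C (constantCoeff f) ∈
            Ideal.span ({X 0, X 1, C (σ i)} : Set R) := by
          rw [hc, map_mul]
          exact Ideal.mul_mem_right _ _ (Ideal.subset_span (by simp))
        have := Ideal.add_mem _ hfm hCc
        simpa using this
      · rw [Ideal.span_le]
        rintro g hg
        simp only [Set.mem_insert_iff, Set.mem_singleton_iff] at hg
        rw [SetLike.mem_coe, Ideal.mem_comap]
        rcases hg with rfl | rfl | rfl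
        · rw [constantCoeff_X]; exact Ideal.zero_mem _
        · rw [constantCoeff_X]; exact Ideal.zero_mem _
        · rw [constantCoeff_C]; exact Ideal.subset_span rfl
    rw [← hker]
    exact Ideal.comap_isMaximal_of_surjective _ hsurj
  -- J ≤ m
  have hJm : ∀ i, katzmanIdeal k q + Ideal.span {C (σ i)} ≤
      Ideal.span {X 0, X 1, C (σ i)} := by
    intro i
    have hx : (X 0 : R) ∈ Ideal.span ({X 0, X 1, C (σ i)} : Set R) :=
      Ideal.subset_span (by simp)
    have hy : (X 1 : R) ∈ Ideal.span ({X 0, X 1, C (σ i)} : Set R) :=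
      Ideal.subset_span (by simp)
    rw [Ideal.add_eq_sup]
    apply sup_le
    · rw [katzmanIdeal, Ideal.span_le]
      rintro g hg
      simp only [Set.mem_insert_iff, Set.mem_singleton_iff] at hg
      rcases hg with rfl | rfl | rfl
      · exact Ideal.pow_mem_of_mem _ hx q hq0
      · exact Ideal.pow_mem_of_mem _ hy q hq0
      · exact Ideal.mul_mem_right _ _ (Ideal.mul_mem_right _ _
          (Ideal.mul_mem_right _ _ hx))
    · rw [Ideal.span_le]
      rintro g hg
      simp only [Set.mem_singleton_iff] at hg
      subst hg
      exact Ideal.subset_span (by simp)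
  -- m ^ (2q) ≤ J
  have hpow : ∀ i, (Ideal.span {X 0, X 1, C (σ i)} : Ideal R) ^ (2 * q) ≤
      katzmanIdeal k q + Ideal.span {C (σ i)} := by
    intro i
    have hm_eq : (Ideal.span {X 0, X 1, C (σ i)} : Ideal R) =
        (Ideal.span {X 0} ⊔ Ideal.span {X 1}) ⊔ Ideal.span {C (σ i)} := by
      rw [Ideal.span_insert, Ideal.span_insert, sup_assoc]
    have h2q : 2 * q = (2 * q - 1) + 1 := by omega
    have step1 : (Ideal.span {X 0, X 1, C (σ i)} : Ideal R) ^ (2 * q) ≤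
        (Ideal.span {X 0} ⊔ Ideal.span {X 1}) ^ (2 * q) ⊔ Ideal.span {C (σ i)} := by
      rw [hm_eq, h2q]
      exact aux_sup_pow _ _ _
    have step2 : ((Ideal.span {X 0} ⊔ Ideal.span {X 1}) : Ideal R) ^ (2 * q) ≤
        Ideal.span {X 0} ^ q ⊔ Ideal.span {X 1} ^ q := by
      rw [two_mul]
      exact Ideal.sup_pow_add_le_pow_sup_pow
    have hxq : (Ideal.span {X 0} : Ideal R) ^ q ≤ katzmanIdeal k q := by
      rw [Ideal.span_singleton_pow, katzmanIdeal, Ideal.span_le]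
      intro g hg
      simp only [Set.mem_singleton_iff] at hg
      subst hg
      exact Ideal.subset_span (by simp)
    have hyq : (Ideal.span {X 1} : Ideal R) ^ q ≤ katzmanIdeal k q := by
      rw [Ideal.span_singleton_pow, katzmanIdeal, Ideal.span_le]
      intro g hg
      simp only [Set.mem_singleton_iff] at hg
      subst hg
      exact Ideal.subset_span (by simp)
    refine step1.trans (sup_le (step2.trans (sup_le ?_ ?_)) ?_)
    · exact hxq.trans (by rw [Ideal.add_eq_sup]; exact le_sup_left)
    · exact hyq.trans (by rw [Ideal.add_eq_sup]; exact le_sup_left)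
    · rw [Ideal.add_eq_sup]; exact le_sup_right
  -- radical
  have hrad : ∀ i, (katzmanIdeal k q + Ideal.span {C (σ i)}).radical =
      Ideal.span {X 0, X 1, C (σ i)} := by
    intro i
    apply le_antisymm
    · exact (Ideal.radical_mono (hJm i)).trans (le_of_eq (hmax i).isPrime.radical)
    · have h1 : (((Ideal.span {X 0, X 1, C (σ i)} : Ideal R)) ^ (2 * q)).radical =
          Ideal.span {X 0, X 1, C (σ i)} := by
        rw [Ideal.radical_pow _ (Nat.mul_ne_zero two_ne_zero hq0.ne'), (hmax i).isPrime.radical]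
      exact h1 ▸ Ideal.radical_mono (hpow i)
  -- coprimality
  have hcop : ∀ i j, i ≠ j → IsCoprime (σ i) (σ j) := by
    intro i j hij
    rw [(hirr i).coprime_iff_not_dvd]
    intro hdvd
    exact hdistinct i j hij ((hirr i).associated_of_dvd (hirr j) hdvd)
  -- intersection
  have key : katzmanIdeal k q + Ideal.span {C (tau k q)} =
      ⨅ i, katzmanIdeal k q + Ideal.span {C (σ i)} := by
    rw [hfact, map_prod,
      aux_prod_inf (katzmanIdeal k q) (fun i => (C (σ i) : R)) Finset.univ
        (fun i _ j _ hij => (hcop i j hij).map (C : Polynomial k →+* R))]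
    exact le_antisymm (le_iInf fun i => Finset.inf_le (Finset.mem_univ i))
      (Finset.le_inf fun i _ => iInf_le _ i)
  refine ⟨key, fun i => ?_, hmax, hrad, hpow⟩
  exact Ideal.isPrimary_of_isMaximal_radical (by rw [hrad i]; exact hmax i)
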